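/- Let G be an essential labelled graph. Every attractor Ω of the dynamical system (Σ(G), σ) equals Σ(π⁻¹(H)) for some nonempty terminal subgraph H of the linking graph G/≈. -/

import Mathlib

/-! Common definitions: labelled graphs, walks, follower sets, the linking
relation, subshifts over `ℤ → A`, chains, and attractors. -/

structure LGraph (A : Type) where
  V : Type
  E : Type
  [finV : Finite V]
  [finE : Finite E]
  s : E → V
  t : E → V
  lab : E → A

attribute [instance] LGraph.finV LGraph.finE

namespace LGraph

variable {A : Type}

/-- `Walk G u v es` : the list of edges `es` forms a walk from `u` to `v`. -/
inductive Walk (G : LGraph A) : G.V → G.V → List G.E → Prop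
  | nil (v : G.V) : Walk G v v []
  | cons {w : G.V} {es : List G.E} (e : G.E) (h : Walk G (G.t e) w es) :
      Walk G (G.s e) w (e :: es)

/-- There is an edge from `u` to `v`. -/
def EdgeRel (G : LGraph A) (u v : G.V) : Prop := ∃ e : G.E, G.s e = u ∧ G.t e = v

/-- `v` is reachable from `u` by a directed walk. -/
def Reach (G : LGraph A) : G.V → G.V → Prop := Relation.ReflTransGen G.EdgeRel

/-- `u` and `v` lie in the same strongly connected component. -/
def SameComp (G : LGraph A) (u v : G.V) : Prop := G.Reach u v ∧ G.Reach v u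

/-- The number of strongly connected components of `G`. -/
noncomputable def numComponents (G : LGraph A) : ℕ :=
  Nat.card {K : Set G.V // ∃ v : G.V, K = {u : G.V | G.SameComp v u}}

/-- The restricted follower set of `v` : words labelling walks starting at `v`
that stay inside the strongly connected component of `v`. -/
def FollowR (G : LGraph A) (v : G.V) : Set (List A) :=
  {w | ∃ (u : G.V) (es : List G.E), G.Walk v u es ∧ es.map G.lab = w ∧
        ∀ e ∈ es, G.SameComp v (G.s e) ∧ G.SameComp v (G.t e)}

/-- Two vertices are linked iff their restricted follower sets have infinite
intersection. -/
def Linked (G : LGraph A) (u v : G.V) : Prop := (G.FollowR u ∩ G.FollowR v).Infinite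

/-- `≈` : the reflexive-transitive closure of the linked relation. -/
def Approx (G : LGraph A) : G.V → G.V → Prop := Relation.ReflTransGen G.Linked

/-- One step in the linking graph `G/≈` (lifted to `G`): either an edge of `G`
or a jump between linked vertices. -/
def GenStep (G : LGraph A) (u v : G.V) : Prop := G.EdgeRel u v ∨ G.Linked u v

/-- Reachability in the linking graph `G/≈`, expressed on vertices of `G`. -/
def GenReach (G : LGraph A) : G.V → G.V → Prop := Relation.ReflTransGen G.GenStep

/-- The language of `G` : words labelling finite walks in `G`. -/
def Lang (G : LGraph A) : Set (List A) :=
  {w | ∃ (u v : G.V) (es : List G.E), G.Walk u v es ∧ es.map G.lab = w}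

/-- `w` has a presentation in the subgraph of `G` induced by the vertex set `S`. -/
def PresIn (G : LGraph A) (S : Set G.V) (w : List A) : Prop :=
  ∃ (u v : G.V) (es : List G.E), G.Walk u v es ∧ es.map G.lab = w ∧
    u ∈ S ∧ v ∈ S ∧ ∀ e ∈ es, G.s e ∈ S ∧ G.t e ∈ S

/-- A presentation of the first `n` letters of `w`, with explicit vertex
sequence `v` and edge sequence `e`. -/
def PresFun (G : LGraph A) (n : ℕ) (w : ℕ → A) (v : ℕ → G.V) (e : ℕ → G.E) : Prop :=
  ∀ i < n, G.s (e i) = v i ∧ G.t (e i) = v (i + 1) ∧ G.lab (e i) = w i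

/-- `S` is a union of `≈`-equivalence classes, i.e. `S = π⁻¹(π(S))` for the
projection `π : G → G/≈`. -/
def SaturatedSet (G : LGraph A) (S : Set G.V) : Prop :=
  ∀ u v : G.V, G.Approx u v → (u ∈ S ↔ v ∈ S)

/-- No edge leaves `S` : together with saturation this says that the image of
`S` in `G/≈` is a terminal subgraph. -/
def ForwardClosed (G : LGraph A) (S : Set G.V) : Prop :=
  ∀ e : G.E, G.s e ∈ S → G.t e ∈ S

/-- Every vertex has an ingoing and an outgoing edge. -/
def Essential (G : LGraph A) : Prop :=
  ∀ v : G.V, (∃ e : G.E, G.t e = v) ∧ (∃ e : G.E, G.s e = v)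

/-- A biinfinite presentation of `x` (vertex sequence `v`, edge sequence `e`)
staying in the vertex set `S`. -/
def BiPresIn (G : LGraph A) (S : Set G.V) (x : ℤ → A) (v : ℤ → G.V) (e : ℤ → G.E) : Prop :=
  ∀ i : ℤ, G.s (e i) = v i ∧ G.t (e i) = v (i + 1) ∧ G.lab (e i) = x i ∧ v i ∈ S

/-- The subshift of biinfinite label sequences of biinfinite walks of `G`
staying in `S`. -/
def SigmaIn (G : LGraph A) (S : Set G.V) : Set (ℤ → A) :=
  {x | ∃ v e, G.BiPresIn S x v e}

/-- The sofic subshift `Σ(G)`. -/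
def Sigma' (G : LGraph A) : Set (ℤ → A) := G.SigmaIn Set.univ

/-- The linking graph `G/≈` is strongly connected. -/
def StronglyConnectedQuot (G : LGraph A) : Prop := ∀ u v : G.V, G.GenReach u v

/-- The linking graph `G/≈` is periodic : its vertices can be partitioned into
`n > 1` classes (indexed by `ZMod n`, each a union of `≈`-classes) so that every
edge advances the class index by one. -/
def PeriodicQuot (G : LGraph A) : Prop :=
  ∃ n : ℕ, 1 < n ∧ ∃ c : G.V → ZMod n,
    (∀ u v : G.V, G.Approx u v → c u = c v) ∧ ∀ e : G.E, c (G.t e) = c (G.s e) + 1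

/-- The label product `G * H`. -/
def labelProduct (G H : LGraph A) : LGraph A where
  V := G.V × H.V
  E := {p : G.E × H.E // G.lab p.1 = H.lab p.2}
  s := fun p => (G.s p.1.1, H.s p.1.2)
  t := fun p => (G.t p.1.1, H.t p.1.2)
  lab := fun p => G.lab p.1.1

end LGraph

section Subshift

variable {A : Type}

/-- The shift map `σ`. -/
def shift (x : ℤ → A) : ℤ → A := fun i => x (i + 1)

open Classical in
/-- The metric `ρ(x,y) = 2^{-n}` where `n` is minimal with `x_n ≠ y_n` or
`x_{-n} ≠ y_{-n}` (and `ρ(x,x) = 0`). -/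
noncomputable def rho (x y : ℤ → A) : ℝ :=
  if x = y then 0
  else (2 : ℝ) ^ (-((sInf {n : ℕ | ∃ i : ℤ, i.natAbs = n ∧ x i ≠ y i} : ℕ) : ℤ))

/-- Closedness with respect to the metric `rho`. -/
def RhoClosed (Sig : Set (ℤ → A)) : Prop :=
  ∀ x : ℤ → A, (∀ ε : ℝ, 0 < ε → ∃ y ∈ Sig, rho x y < ε) → x ∈ Sig

/-- A subshift : a closed, strongly shift-invariant subset of `A^ℤ`. -/
def IsSubshift (Sig : Set (ℤ → A)) : Prop :=
  RhoClosed Sig ∧ shift '' Sig = Sig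

/-- The language of the subshift `Sig` : all finite factors of its points. -/
def lang (Sig : Set (ℤ → A)) : Set (List A) :=
  {w | ∃ x ∈ Sig, ∃ k : ℤ, ∀ (i : ℕ) (h : i < w.length), w.get ⟨i, h⟩ = x (k + i)}

/-- The central factor `x_{[-l,l]}` of a biinfinite word. -/
def central (x : ℤ → A) (l : ℕ) : List A :=
  (List.range (2 * l + 1)).map fun i => x ((i : ℤ) - (l : ℤ))

/-- `ChainWord L u v n w` : `w` is a chain of length `n` from `u` to `v` in the
language `L` : `|w| = n + |u|`, `w` has prefix `u` and suffix `v`, and every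
factor of `w` of length at most `|u|` belongs to `L`. -/
def ChainWord (L : Set (List A)) (u v : List A) (n : ℕ) (w : List A) : Prop :=
  u.length = v.length ∧ w.length = n + u.length ∧
  w.take u.length = u ∧ w.drop n = v ∧
  ∀ z : List A, z <:+: w → z.length ≤ u.length → z ∈ L

/-- An `ε`-chain of length `n > 0` from `x` to `y` inside `Sig`. -/
def EpsChain (Sig : Set (ℤ → A)) (ε : ℝ) (n : ℕ) (x y : ℤ → A) : Prop :=
  0 < n ∧ ∃ z : ℕ → ℤ → A, z 0 = x ∧ z n = y ∧ (∀ i ≤ n, z i ∈ Sig) ∧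
    ∀ i < n, rho (shift (z i)) (z (i + 1)) < ε

/-- The chain relation of `(Sig, σ)`. -/
def ChainRel (Sig : Set (ℤ → A)) (x y : ℤ → A) : Prop :=
  ∀ ε : ℝ, 0 < ε → ∃ n : ℕ, EpsChain Sig ε n x y

/-- Chain-transitivity. -/
def ChainTransitive (Sig : Set (ℤ → A)) : Prop :=
  ∀ x ∈ Sig, ∀ y ∈ Sig, ChainRel Sig x y

/-- Chain-mixing. -/
def ChainMixing (Sig : Set (ℤ → A)) : Prop :=
  ∀ x ∈ Sig, ∀ y ∈ Sig, ∀ ε : ℝ, 0 < ε → ∃ k : ℕ, ∀ n, k < n → EpsChain Sig ε n x y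

/-- Distance from a point to a set, with respect to `rho`. -/
noncomputable def distTo (x : ℤ → A) (Y : Set (ℤ → A)) : ℝ := sInf (rho x '' Y)

/-- `Y` is an attractor of the dynamical system `(Sig, σ)`. -/
def IsAttractor (Sig Y : Set (ℤ → A)) : Prop :=
  Y.Nonempty ∧ Y ⊆ Sig ∧ RhoClosed Y ∧ shift '' Y = Y ∧
  (∀ ε : ℝ, 0 < ε → ∃ δ : ℝ, 0 < δ ∧ ∀ x ∈ Sig, distTo x Y < δ →
    ∀ n : ℕ, 0 < n → distTo (shift^[n] x) Y < ε) ∧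
  (∃ δ : ℝ, 0 < δ ∧ ∀ x ∈ Sig, distTo x Y < δ →
    Filter.Tendsto (fun n : ℕ => distTo (shift^[n] x) Y) Filter.atTop (nhds 0))

end Subshift

section Aux15
variable {A : Type}

theorem rho_nonneg (x y : ℤ → A) : 0 ≤ rho x y := by
  unfold rho; split
  · exact le_refl 0
  · positivity

theorem pow2_anti {a b : ℤ} (h : a ≤ b) : (2:ℝ) ^ (-b) ≤ (2:ℝ) ^ (-a) :=
  zpow_le_zpow_right₀ (by norm_num) (by omega)

theorem rho_le_of_agree {x y : ℤ → A} {l : ℕ} (h : ∀ i : ℤ, i.natAbs ≤ l → x i = y i) :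
    rho x y ≤ (2:ℝ) ^ (-((l:ℤ)+1)) := by
  unfold rho
  split
  · positivity
  · rename_i hxy
    have hne : {n : ℕ | ∃ i : ℤ, i.natAbs = n ∧ x i ≠ y i}.Nonempty := by
      rcases Set.eq_empty_or_nonempty {n : ℕ | ∃ i : ℤ, i.natAbs = n ∧ x i ≠ y i} with he | hn
      · exfalso; apply hxy; funext i
        by_contra hd
        exact Set.eq_empty_iff_forall_notMem.mp he i.natAbs ⟨i, rfl, hd⟩
      · exact hn
    obtain ⟨i, hi, hd⟩ := Nat.sInf_mem hne
    have h1 : l + 1 ≤ sInf {n : ℕ | ∃ i : ℤ, i.natAbs = n ∧ x i ≠ y i} := by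
      rw [← hi]
      by_contra hlt
      push_neg at hlt
      exact hd (h i (by omega))
    have h1' : ((l:ℤ)+1) ≤ ((sInf {n : ℕ | ∃ i : ℤ, i.natAbs = n ∧ x i ≠ y i} : ℕ) : ℤ) := by
      exact_mod_cast h1
    exact pow2_anti h1'

theorem rho_lt_of_agree {x y : ℤ → A} {l : ℕ} (h : ∀ i : ℤ, i.natAbs ≤ l → x i = y i) :
    rho x y < (2:ℝ) ^ (-(l:ℤ)) := by
  refine lt_of_le_of_lt (rho_le_of_agree h) ?_
  apply zpow_lt_zpow_right₀ (by norm_num : (1:ℝ) < 2)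
  omega

theorem agree_of_rho_lt {x y : ℤ → A} {l : ℕ} (h : rho x y < (2:ℝ) ^ (-(l:ℤ))) :
    ∀ i : ℤ, i.natAbs ≤ l → x i = y i := by
  intro i hi
  unfold rho at h
  split at h
  · rename_i hxy; rw [hxy]
  · by_contra hd
    have hmem : i.natAbs ∈ {n : ℕ | ∃ i : ℤ, i.natAbs = n ∧ x i ≠ y i} := ⟨i, rfl, hd⟩
    have h1 : sInf {n : ℕ | ∃ i : ℤ, i.natAbs = n ∧ x i ≠ y i} ≤ l :=
      le_trans (Nat.sInf_le hmem) hi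
    have h1' : ((sInf {n : ℕ | ∃ i : ℤ, i.natAbs = n ∧ x i ≠ y i} : ℕ) : ℤ) ≤ (l:ℤ) := by
      exact_mod_cast h1
    have h2 := pow2_anti h1'
    linarith

theorem pow_pos' (l : ℕ) : 0 < (2:ℝ) ^ (-(l:ℤ)) := by positivity

theorem exists_pow_lt' {δ : ℝ} (hδ : 0 < δ) : ∃ l : ℕ, (2:ℝ) ^ (-(l:ℤ)) < δ := by
  obtain ⟨l, hl⟩ := exists_pow_lt_of_lt_one hδ (by norm_num : (1:ℝ)/2 < 1)
  refine ⟨l, ?_⟩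
  calc (2:ℝ) ^ (-(l:ℤ)) = ((1:ℝ)/2)^l := by
        rw [zpow_neg, one_div, inv_pow, ← zpow_natCast]
      _ < δ := hl

/-- The two-sided shift by `k`. -/
def shiftZ (k : ℤ) (x : ℤ → A) : ℤ → A := fun i => x (i + k)

theorem shift_shiftZ (k : ℤ) (x : ℤ → A) : shift (shiftZ k x) = shiftZ (k+1) x := by
  funext i; simp [shift, shiftZ]; ring_nf

theorem shiftZ_zero (x : ℤ → A) : shiftZ 0 x = x := by funext i; simp [shiftZ]

theorem shift_iterate (n : ℕ) (x : ℤ → A) : shift^[n] x = shiftZ n x := by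
  induction n with
  | zero => simp [shiftZ_zero]
  | succ n ih =>
      rw [Function.iterate_succ_apply', ih, shift_shiftZ]
      norm_num

theorem shiftZ_mem_of_inv {Y : Set (ℤ → A)} (hinv : shift '' Y = Y) (k : ℤ) {x : ℤ → A}
    (hx : x ∈ Y) : shiftZ k x ∈ Y := by
  induction k using Int.induction_on with
  | zero => rwa [shiftZ_zero]
  | succ n ih =>
      have : shift (shiftZ n x) ∈ shift '' Y := ⟨_, ih, rfl⟩
      rw [hinv, shift_shiftZ] at this
      exact this
  | pred n ih =>
      have : shiftZ (-n) x ∈ shift '' Y := by rw [hinv]; exact ih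
      obtain ⟨y, hy, hxy⟩ := this
      have : y = shiftZ (-n - 1) x := by
        funext i
        have := congrFun hxy (i - 1)
        simp [shift, shiftZ] at this ⊢
        rw [this]; ring_nf
      rwa [← this]

theorem distTo_lt_of_rho_lt {Y : Set (ℤ → A)} {x y : ℤ → A} {δ : ℝ} (hy : y ∈ Y)
    (h : rho x y < δ) : distTo x Y < δ := by
  have hb : BddBelow (rho x '' Y) := by
    refine ⟨0, ?_⟩
    rintro _ ⟨z, _, rfl⟩
    exact rho_nonneg _ _
  exact lt_of_le_of_lt (csInf_le hb ⟨y, hy, rfl⟩) h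

theorem exists_rho_lt_of_distTo_lt {Y : Set (ℤ → A)} {x : ℤ → A} {δ : ℝ} (hne : Y.Nonempty)
    (h : distTo x Y < δ) : ∃ y ∈ Y, rho x y < δ := by
  obtain ⟨_, ⟨y, hy, rfl⟩, hlt⟩ := exists_lt_of_csInf_lt (hne.image _) h
  exact ⟨y, hy, hlt⟩

theorem mem_of_distTo_small {Y : Set (ℤ → A)} {x : ℤ → A} (hcl : RhoClosed Y)
    (hne : Y.Nonempty) (h : ∀ ε : ℝ, 0 < ε → distTo x Y < ε) : x ∈ Y := by
  apply hcl
  intro ε hε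
  exact exists_rho_lt_of_distTo_lt hne (h ε hε)

end Aux15

section Aux15b
variable {A : Type} {G : LGraph A}

theorem walk_append {u v w : G.V} {es fs : List G.E} (h1 : G.Walk u v es)
    (h2 : G.Walk v w fs) : G.Walk u w (es ++ fs) := by
  induction h1 with
  | nil => simpa using h2
  | cons e h ih => exact LGraph.Walk.cons e (ih h2)

theorem reach_walk {u v : G.V} (h : G.Reach u v) : ∃ es, G.Walk u v es := by
  induction h using Relation.ReflTransGen.head_induction_on with
  | refl => exact ⟨[], LGraph.Walk.nil v⟩
  | head hstep _ ih =>
      obtain ⟨e, he1, he2⟩ := hstep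
      obtain ⟨es, hes⟩ := ih
      refine ⟨e :: es, ?_⟩
      rw [← he1]
      exact LGraph.Walk.cons e (by rwa [he2])

theorem walk_nil' {a b : G.V} (h : G.Walk a b []) : a = b := by
  generalize hes : ([] : List G.E) = es at h
  cases h with
  | nil => rfl
  | cons e h => simp at hes

theorem walk_end {u v : G.V} {es : List G.E} (h : G.Walk u v es) (hne : es ≠ []) :
    ∃ e ∈ es, G.t e = v := by
  induction h with
  | nil => exact absurd rfl hne
  | cons e h ih =>
      rename_i w tl
      cases tl with
      | nil => exact ⟨e, by simp, walk_nil' h⟩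
      | cons e' tl' =>
          obtain ⟨e'', he1, he2⟩ := ih (by simp)
          exact ⟨e'', by simp [he1], he2⟩

theorem walk_get {u v : G.V} {es : List G.E} (h : G.Walk u v es) :
    (∀ (hi : 0 < es.length), G.s (es.get ⟨0, hi⟩) = u) ∧
    (∀ i (hi : i+1 < es.length), G.s (es.get ⟨i+1, hi⟩) = G.t (es.get ⟨i, by omega⟩)) ∧
    (∀ (hi : 0 < es.length), G.t (es.get ⟨es.length-1, by omega⟩) = v) ∧
    (es = [] → u = v) := by
  induction h with
  | nil => exact ⟨fun hi => absurd hi (by simp), fun i hi => absurd hi (by simp),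
      fun hi => absurd hi (by simp), fun _ => rfl⟩
  | cons e h ih =>
      rename_i w tl
      obtain ⟨ih1, ih2, ih3, ih4⟩ := ih
      refine ⟨fun _ => rfl, ?_, ?_, by simp⟩
      · intro i hi
        simp only [List.length_cons] at hi
        cases i with
        | zero =>
            simp only [List.get_cons_succ, List.get_cons_zero]
            exact ih1 (by omega)
        | succ j =>
            simp only [List.get_cons_succ]
            exact ih2 j (by omega)
      · intro hi
        cases tl with
        | nil => simpa using ih4 rfl
        | cons e' tl' =>
            have h3 := ih3 (by simp)
            simp only [List.length_cons] at h3 ⊢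
            have hidx : (⟨tl'.length + 1 + 1 - 1, by simp⟩ : Fin (tl'.length + 1 + 1)) =
                ⟨(tl'.length + 1 - 1) + 1, by simp⟩ := by
              apply Fin.ext; simp
            rw [hidx, List.get_cons_succ]
            exact h3

theorem forward_chain (hG : G.Essential) (v : G.V) :
    ∃ f : ℕ → G.E, G.s (f 0) = v ∧ ∀ n, G.s (f (n+1)) = G.t (f n) := by
  have hch : ∀ u : G.V, ∃ e : G.E, G.s e = u := fun u => (hG u).2
  choose out hout using hch
  exact ⟨fun n => Nat.rec (out v) (fun _ e => out (G.t e)) n, hout v, fun n => hout _⟩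

/-- Extend a finite walk to a forward-infinite edge chain with the same prefix. -/
theorem walk_extend (hG : G.Essential) {u v : G.V} {es : List G.E} (h : G.Walk u v es) :
    ∃ f : ℕ → G.E, (∀ i (hi : i < es.length), f i = es.get ⟨i, hi⟩) ∧
      (0 < es.length → G.s (f 0) = u) ∧ (∀ n, G.s (f (n+1)) = G.t (f n)) := by
  obtain ⟨g, hg0, hg⟩ := forward_chain hG v
  classical
  refine ⟨fun i => if hi : i < es.length then es.get ⟨i, hi⟩ else g (i - es.length), ?_, ?_, ?_⟩
  · intro i hi; simp [hi]
  · intro hlen; simp only [hlen, dif_pos]; exact (walk_get h).1 hlen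
  · intro n
    rcases lt_trichotomy (n+1) es.length with h1 | h1 | h1
    · have h2 : n < es.length := by omega
      simp only [dif_pos h1, dif_pos h2]
      exact (walk_get h).2.1 n h1
    · have h2 : n < es.length := by omega
      have h3 : ¬ (n+1 < es.length) := by omega
      simp only [dif_neg h3, dif_pos h2]
      have : n + 1 - es.length = 0 := by omega
      rw [this, hg0]
      have hidx : (⟨n, h2⟩ : Fin es.length) = ⟨es.length - 1, by omega⟩ := by
        apply Fin.ext; simp; omega
      rw [hidx]
      exact ((walk_get h).2.2.1 (by omega)).symm
    · have h2 : ¬ (n < es.length) := by omega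
      have h3 : ¬ (n+1 < es.length) := by omega
      simp only [dif_neg h2, dif_neg h3]
      have : n + 1 - es.length = (n - es.length) + 1 := by omega
      rw [this]
      exact hg _

/-- A biinfinite edge chain gives a point of `SigmaIn S` provided sources lie in `S`. -/
theorem bichain_mem {S : Set G.V} {E : ℤ → G.E} (hE : ∀ i : ℤ, G.s (E (i+1)) = G.t (E i))
    (hS : ∀ i : ℤ, G.s (E i) ∈ S) :
    G.BiPresIn S (fun i => G.lab (E i)) (fun i => G.s (E i)) E :=
  fun i => ⟨rfl, (hE i).symm, rfl, hS i⟩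

/-- Splice a biinfinite edge chain (given by a presentation) with a forward chain. -/
noncomputable def spliceE (ez : ℤ → G.E) (f : ℕ → G.E) : ℤ → G.E :=
  fun i => if i < 0 then ez i else f i.toNat

theorem splice_bichain {S : Set G.V} {y : ℤ → A} {vz : ℤ → G.V} {ez : ℤ → G.E}
    (hpres : G.BiPresIn S y vz ez) {f : ℕ → G.E}
    (hf : ∀ n, G.s (f (n+1)) = G.t (f n)) (hf0 : G.s (f 0) = vz 0) :
    ∀ i : ℤ, G.s (spliceE ez f (i+1)) = G.t (spliceE ez f i) := by
  intro i
  rcases lt_trichotomy i (-1) with h1 | h1 | h1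
  · have e1 : spliceE ez f (i+1) = ez (i+1) := by unfold spliceE; rw [if_pos (by omega)]
    have e2 : spliceE ez f i = ez i := by unfold spliceE; rw [if_pos (by omega)]
    rw [e1, e2, (hpres (i+1)).1, (hpres i).2.1]
  · subst h1
    have e1 : spliceE ez f (-1+1) = f 0 := by unfold spliceE; norm_num
    have e2 : spliceE ez f (-1) = ez (-1) := by unfold spliceE; rw [if_pos (by omega)]
    rw [e1, e2, hf0, (hpres (-1)).2.1]
    norm_num
  · have e1 : spliceE ez f (i+1) = f (i.toNat + 1) := by
      unfold spliceE; rw [if_neg (by omega)]; congr 1; omega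
    have e2 : spliceE ez f i = f i.toNat := by unfold spliceE; rw [if_neg (by omega)]
    rw [e1, e2, hf]

end Aux15b

section Aux15c
variable {A : Type} {G : LGraph A}

theorem shiftZ_add' (a b : ℤ) (x : ℤ → A) : shiftZ a (shiftZ b x) = shiftZ (a+b) x := by
  funext i
  show x (i + a + b) = x (i + (a + b))
  congr 1; ring

theorem sigmaIn_shiftZ {S : Set G.V} {x : ℤ → A} (k : ℤ) (hx : x ∈ G.SigmaIn S) :
    shiftZ k x ∈ G.SigmaIn S := by
  obtain ⟨v, e, hpres⟩ := hx
  refine ⟨fun i => v (i+k), fun i => e (i+k), fun i => ?_⟩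
  obtain ⟨h1, h2, h3, h4⟩ := hpres (i+k)
  exact ⟨h1, by rw [h2]; congr 1; ring, h3, h4⟩

theorem forward_chain_from (hG : G.Essential) (e : G.E) :
    ∃ f : ℕ → G.E, f 0 = e ∧ ∀ n, G.s (f (n+1)) = G.t (f n) := by
  have hch : ∀ u : G.V, ∃ e : G.E, G.s e = u := fun u => (hG u).2
  choose out hout using hch
  exact ⟨fun n => Nat.rec e (fun _ e' => out (G.t e')) n, rfl, fun n => hout _⟩

/-- The key absorption lemma: splicing an arbitrary admissible future onto a point
of the attractor stays in the attractor. -/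
theorem absorb {Y : Set (ℤ → A)} (hY : IsAttractor G.Sigma' Y)
    {y : ℤ → A} {vz : ℤ → G.V} {ez : ℤ → G.E} (hy : y ∈ Y)
    (hpres : G.BiPresIn Set.univ y vz ez) {f : ℕ → G.E}
    (hf : ∀ n, G.s (f (n+1)) = G.t (f n)) (hf0 : G.s (f 0) = vz 0) :
    (fun i : ℤ => G.lab (spliceE ez f i)) ∈ Y := by
  obtain ⟨hne, hsub, hcl, hinv, hcond1, _⟩ := hY
  have hbc := splice_bichain hpres hf hf0
  have hzS : (fun i : ℤ => G.lab (spliceE ez f i)) ∈ G.Sigma' :=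
    ⟨_, _, bichain_mem hbc (fun i => Set.mem_univ _)⟩
  apply mem_of_distTo_small hcl hne
  intro ε hε
  obtain ⟨δ, hδ, hδ1⟩ := hcond1 ε hε
  obtain ⟨N₀, hN⟩ := exists_pow_lt' hδ
  set N : ℕ := N₀ + 1 with hNdef
  have hagree : ∀ j : ℤ, j.natAbs ≤ N₀ →
      shiftZ (-(N:ℤ)) (fun i : ℤ => G.lab (spliceE ez f i)) j = shiftZ (-(N:ℤ)) y j := by
    intro j hj
    show G.lab (spliceE ez f (j + -(N:ℤ))) = y (j + -(N:ℤ))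
    have hsp : spliceE ez f (j + -(N:ℤ)) = ez (j + -(N:ℤ)) := by
      unfold spliceE; rw [if_pos (by omega)]
    rw [hsp]
    exact (hpres _).2.2.1
  have hrho : rho (shiftZ (-(N:ℤ)) (fun i : ℤ => G.lab (spliceE ez f i)))
      (shiftZ (-(N:ℤ)) y) < δ := by
    refine lt_of_le_of_lt (rho_le_of_agree hagree) ?_
    have : ((N₀:ℤ)+1) = (N:ℤ) := by rw [hNdef]; push_cast; ring
    rw [this]
    exact lt_of_le_of_lt (pow2_anti (by omega)) hN
  have hYmem : shiftZ (-(N:ℤ)) y ∈ Y := shiftZ_mem_of_inv hinv _ hy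
  have hdist : distTo (shiftZ (-(N:ℤ)) (fun i : ℤ => G.lab (spliceE ez f i))) Y < δ :=
    distTo_lt_of_rho_lt hYmem hrho
  have hz' := sigmaIn_shiftZ (-(N:ℤ)) hzS
  have hfin := hδ1 _ hz' hdist N (by omega)
  rw [shift_iterate, shiftZ_add'] at hfin
  have : ((N:ℤ) + -(N:ℤ)) = 0 := by ring
  rwa [this, shiftZ_zero] at hfin

/-- The set of vertices through which a point of `Y` passes. -/
def Tset (G : LGraph A) (Y : Set (ℤ → A)) : Set G.V :=
  {v | ∃ y ∈ Y, ∃ vz ez, G.BiPresIn Set.univ y vz ez ∧ vz 0 = v}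

theorem Tset_vertices {Y : Set (ℤ → A)} (hinv : shift '' Y = Y) {y : ℤ → A}
    {vz : ℤ → G.V} {ez : ℤ → G.E} (hy : y ∈ Y) (hpres : G.BiPresIn Set.univ y vz ez)
    (k : ℤ) : vz k ∈ Tset G Y := by
  refine ⟨shiftZ k y, shiftZ_mem_of_inv hinv k hy,
    fun i => vz (i+k), fun i => ez (i+k), fun i => ?_, by norm_num⟩
  obtain ⟨h1, h2, h3, h4⟩ := hpres (i+k)
  exact ⟨h1, by rw [h2]; congr 1; ring, h3, trivial⟩

theorem Y_subset_sigmaInT {Y : Set (ℤ → A)} (hY : IsAttractor G.Sigma' Y) :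
    Y ⊆ G.SigmaIn (Tset G Y) := by
  intro y hy
  obtain ⟨vz, ez, hpres⟩ := hY.2.1 hy
  exact ⟨vz, ez, fun i => ⟨(hpres i).1, (hpres i).2.1, (hpres i).2.2.1,
    Tset_vertices hY.2.2.2.1 hy hpres i⟩⟩

theorem Tset_nonempty {Y : Set (ℤ → A)} (hY : IsAttractor G.Sigma' Y) :
    (Tset G Y).Nonempty := by
  obtain ⟨y, hy⟩ := hY.1
  obtain ⟨vz, ez, hpres⟩ := hY.2.1 hy
  exact ⟨vz 0, Tset_vertices hY.2.2.2.1 hy hpres 0⟩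

theorem Tset_forwardClosed (hG : G.Essential) {Y : Set (ℤ → A)}
    (hY : IsAttractor G.Sigma' Y) : G.ForwardClosed (Tset G Y) := by
  intro e he
  obtain ⟨y, hy, vz, ez, hpres, h0⟩ := he
  obtain ⟨f, hf0, hf⟩ := forward_chain_from hG e
  have hsf0 : G.s (f 0) = vz 0 := by rw [hf0, h0]
  have hzY := absorb hY hy hpres hf hsf0
  have hzpres := bichain_mem (G := G) (S := Set.univ) (splice_bichain hpres hf hsf0)
    (fun i => Set.mem_univ _)
  have := Tset_vertices hY.2.2.2.1 hzY hzpres 1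
  have hv1 : G.s (spliceE ez f (1:ℤ)) = G.t e := by
    show G.s (spliceE ez f 1) = G.t e
    have hsp : spliceE ez f (1:ℤ) = f 1 := by unfold spliceE; norm_num
    rw [hsp, hf 0, hf0]
  rwa [hv1] at this

theorem sigmaInT_subset_Y {Y : Set (ℤ → A)} (hY : IsAttractor G.Sigma' Y) :
    G.SigmaIn (Tset G Y) ⊆ Y := by
  intro x hx
  obtain ⟨v, e, hpres⟩ := hx
  apply hY.2.2.1
  intro ε hε
  obtain ⟨l, hl⟩ := exists_pow_lt' hε
  obtain ⟨y, hy, vz, ez, hyp, h0⟩ := (hpres (-(l:ℤ))).2.2.2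
  set f : ℕ → G.E := fun n => e ((n:ℤ) - l) with hfdef
  have hf : ∀ n, G.s (f (n+1)) = G.t (f n) := by
    intro n
    show G.s (e (((n+1 : ℕ):ℤ) - l)) = G.t (e ((n:ℤ) - l))
    rw [(hpres _).1, (hpres ((n:ℤ) - l)).2.1]
    congr 1; push_cast; ring
  have hf0 : G.s (f 0) = vz 0 := by
    show G.s (e (((0:ℕ):ℤ) - l)) = vz 0
    rw [(hpres _).1, h0]
    congr 1; push_cast; ring
  have hzY := absorb hY hy hyp hf hf0
  refine ⟨shiftZ l (fun i : ℤ => G.lab (spliceE ez f i)),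
    shiftZ_mem_of_inv hY.2.2.2.1 l hzY, ?_⟩
  have hagree : ∀ i : ℤ, i.natAbs ≤ l →
      x i = shiftZ (l:ℤ) (fun i : ℤ => G.lab (spliceE ez f i)) i := by
    intro i hi
    show x i = G.lab (spliceE ez f (i + l))
    have hsp : spliceE ez f (i + (l:ℤ)) = f (i + (l:ℤ)).toNat := by
      unfold spliceE; rw [if_neg (by omega)]
    rw [hsp]
    show x i = G.lab (e ((((i + (l:ℤ)).toNat : ℕ):ℤ) - l))
    have harg : (((i + (l:ℤ)).toNat : ℕ):ℤ) - l = i := by omega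
    rw [harg, (hpres i).2.2.1]
  refine lt_of_le_of_lt (rho_le_of_agree hagree) (lt_of_le_of_lt (pow2_anti (by omega)) hl)

end Aux15c

section Aux15d
variable {A : Type} {G : LGraph A}

theorem get_congr {c : List G.E} {m n : ℕ} (hm : m < c.length) (h : m = n) :
    c.get ⟨m, hm⟩ = c.get ⟨n, h ▸ hm⟩ := by subst h; rfl

theorem exists_long_word [Finite A] {Su : Set (List A)} (h : Su.Infinite) (L : ℕ) :
    ∃ w ∈ Su, L < w.length := by
  by_contra hc
  push_neg at hc
  exact h ((List.finite_length_le A L).subset hc)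

/-- The biinfinite periodic edge chain obtained by repeating a cycle. -/
noncomputable def cycE (c : List G.E) (hp : 0 < c.length) : ℤ → G.E :=
  fun i => c.get ⟨(i % (c.length : ℤ)).toNat, by
    have h1 : 0 ≤ i % (c.length : ℤ) := Int.emod_nonneg i (by omega)
    have h2 : i % (c.length : ℤ) < c.length := Int.emod_lt_of_pos i (by exact_mod_cast hp)
    omega⟩

theorem cycE_eq {c : List G.E} (hp : 0 < c.length) (i : ℤ) (j : ℕ) (hj : j < c.length)
    (h : (i % (c.length : ℤ)).toNat = j) : cycE c hp i = c.get ⟨j, hj⟩ := by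
  unfold cycE
  congr 1
  exact Fin.ext h

theorem emod_succ (n : ℤ) (i : ℤ) : (i+1) % n = (i % n + 1) % n := by
  conv_rhs => rw [Int.add_emod, Int.emod_emod_of_dvd _ dvd_rfl, ← Int.add_emod]

theorem cycE_adj {v : G.V} {c : List G.E} (hc : G.Walk v v c) (hp : 0 < c.length) :
    ∀ i : ℤ, G.s (cycE c hp (i+1)) = G.t (cycE c hp i) := by
  intro i
  have hpz : (0:ℤ) < (c.length:ℤ) := by exact_mod_cast hp
  have h1 : 0 ≤ i % (c.length : ℤ) := Int.emod_nonneg i (by omega)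
  have h2 : i % (c.length : ℤ) < c.length := Int.emod_lt_of_pos i hpz
  set j : ℕ := (i % (c.length : ℤ)).toNat with hjdef
  have hij : (j:ℤ) = i % (c.length : ℤ) := by omega
  have hj : j < c.length := by omega
  by_cases hcase : j + 1 < c.length
  · have hmod : ((i+1) % (c.length : ℤ)).toNat = j + 1 := by
      rw [emod_succ, ← hij]
      rw [Int.emod_eq_of_lt (by omega) (by exact_mod_cast hcase)]
      omega
    rw [cycE_eq hp (i+1) (j+1) hcase hmod, cycE_eq hp i j hj rfl]
    exact (walk_get hc).2.1 j hcase
  · have hjtop : j + 1 = c.length := by omega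
    have hmod : ((i+1) % (c.length : ℤ)).toNat = 0 := by
      rw [emod_succ, ← hij]
      have : (j:ℤ) + 1 = (c.length:ℤ) := by exact_mod_cast hjtop
      rw [this, Int.emod_self]
      rfl
    rw [cycE_eq hp (i+1) 0 hp hmod, cycE_eq hp i j hj rfl,
        get_congr hj (show j = c.length - 1 by omega)]
    rw [(walk_get hc).1 hp, (walk_get hc).2.2.1 hp]

theorem cycE_period {c : List G.E} (hp : 0 < c.length) (i m : ℤ) :
    cycE c hp (i + (c.length:ℤ) * m) = cycE c hp i := by
  have h1 : 0 ≤ i % (c.length:ℤ) := Int.emod_nonneg i (by omega)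
  have h2 : i % (c.length:ℤ) < c.length := Int.emod_lt_of_pos i (by exact_mod_cast hp)
  rw [cycE_eq hp _ ((i % (c.length:ℤ)).toNat) (by omega) (by rw [Int.add_mul_emod_self_left]),
      cycE_eq hp i ((i % (c.length:ℤ)).toNat) (by omega) rfl]

theorem follow_cycle {v : G.V} {w : List A} (hw : w ∈ G.FollowR v) (hne : 0 < w.length) :
    ∃ c : List G.E, G.Walk v v c ∧ w.length ≤ c.length ∧
      ∀ i (hi : i < w.length) (hic : i < c.length),
        G.lab (c.get ⟨i, hic⟩) = w.get ⟨i, hi⟩ := by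
  obtain ⟨v', es, hwalk, hmap, hcomp⟩ := hw
  subst hmap
  simp only [List.length_map] at hne
  have hesne : es ≠ [] := by
    intro h; rw [h] at hne; simp at hne
  obtain ⟨elast, helast, het⟩ := walk_end hwalk hesne
  have hreach : G.Reach v' v := by
    have h' := (hcomp elast helast).2
    rw [het] at h'
    exact h'.2
  obtain ⟨r, hr⟩ := reach_walk hreach
  refine ⟨es ++ r, walk_append hwalk hr, by simp, ?_⟩
  intro i hi hic
  have hi' : i < es.length := by simpa using hi
  rw [List.get_eq_getElem, List.get_eq_getElem, List.getElem_map,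
    List.getElem_append_left hi']

end Aux15d

section Aux15e
variable {A : Type} {G : LGraph A}

theorem linked_step [Finite A] (hG : G.Essential) {Y : Set (ℤ → A)}
    (hY : IsAttractor G.Sigma' Y) {u v : G.V} (hlink : G.Linked u v)
    (hu : u ∈ Tset G Y) : v ∈ Tset G Y := by
  obtain ⟨δ2, hδ2, hten⟩ := hY.2.2.2.2.2
  obtain ⟨δ1, hδ1, hd1⟩ := hY.2.2.2.2.1 δ2 hδ2
  obtain ⟨l, hl1⟩ := exists_pow_lt' hδ1
  obtain ⟨w, hwmem, hwlen⟩ := exists_long_word hlink (2*l)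
  obtain ⟨hwu, hwv⟩ := hwmem
  obtain ⟨u', es, hwalk, hmap, -⟩ := hwu
  subst hmap
  have hwpos : 0 < (es.map G.lab).length := by simp at hwlen ⊢; omega
  have heslen : 0 < es.length := by simpa using hwpos
  -- v-side cycle
  obtain ⟨c, hcwalk, hclen, hclab⟩ := follow_cycle hwv hwpos
  have hp : 0 < c.length := by simp at hclen; omega
  set yper : ℤ → A := fun i => G.lab (cycE c hp i) with hyper
  have hadj := cycE_adj hcwalk hp
  have hperpres := bichain_mem (G := G) (S := Set.univ) hadj (fun i => Set.mem_univ _)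
  have hperS : yper ∈ G.Sigma' := ⟨_, _, hperpres⟩
  -- u-side point of Y
  obtain ⟨f, hfpre, hfstart, hf⟩ := walk_extend hG hwalk
  obtain ⟨yu, hyu, vz, ez, hyp, h0⟩ := hu
  have hf0 : G.s (f 0) = vz 0 := by rw [hfstart heslen, h0]
  have hxY := absorb hY hyu hyp hf hf0
  set x : ℤ → A := fun i => G.lab (spliceE ez f i) with hx
  -- agreement on [0, w.length)
  have hagree0 : ∀ k : ℤ, 0 ≤ k → k < ((es.map G.lab).length : ℤ) → yper k = x k := by
    intro k hk0 hk1
    have hkN : k.toNat < (es.map G.lab).length := by omega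
    have hkc : k < (c.length : ℤ) := by
      have := hclen; omega
    have h1 : yper k = (es.map G.lab).get ⟨k.toNat, hkN⟩ := by
      show G.lab (cycE c hp k) = _
      rw [cycE_eq hp k k.toNat (by omega) (by rw [Int.emod_eq_of_lt hk0 hkc])]
      exact hclab k.toNat hkN (by omega)
    have h2 : x k = (es.map G.lab).get ⟨k.toNat, hkN⟩ := by
      show G.lab (spliceE ez f k) = _
      have hsp : spliceE ez f k = f k.toNat := by unfold spliceE; rw [if_neg (by omega)]
      rw [hsp, hfpre k.toNat (by simpa using hkN)]
      rw [List.get_eq_getElem, List.get_eq_getElem, List.getElem_map]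
    rw [h1, h2]
  have hagree : ∀ j : ℤ, j.natAbs ≤ l → shiftZ (l:ℤ) yper j = shiftZ (l:ℤ) x j := by
    intro j hj
    have := hwlen
    exact hagree0 (j + (l:ℤ)) (by omega) (by simp at this ⊢; omega)
  have hrho : rho (shiftZ (l:ℤ) yper) (shiftZ (l:ℤ) x) < δ1 :=
    lt_of_le_of_lt (rho_le_of_agree hagree) (lt_of_le_of_lt (pow2_anti (by omega)) hl1)
  have hdist : distTo (shiftZ (l:ℤ) yper) Y < δ1 :=
    distTo_lt_of_rho_lt (shiftZ_mem_of_inv hY.2.2.2.1 (l:ℤ) hxY) hrho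
  have hperS' := sigmaIn_shiftZ (l:ℤ) hperS
  -- periodicity
  have hper : ∀ m : ℕ, shift^[m * c.length] yper = yper := by
    intro m
    rw [shift_iterate]
    funext i
    show yper (i + ((m * c.length : ℕ):ℤ)) = yper i
    have harg : (i + ((m * c.length : ℕ):ℤ)) = i + (c.length:ℤ) * (m:ℤ) := by push_cast; ring
    rw [harg]
    show G.lab (cycE c hp (i + (c.length:ℤ) * m)) = G.lab (cycE c hp i)
    rw [cycE_period]
  set n : ℕ := (l+1) * c.length - l with hn
  have hge : l + 1 ≤ (l+1) * c.length := Nat.le_mul_of_pos_right (l+1) hp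
  have hnpos : 0 < n := by omega
  have hstep := hd1 _ hperS' hdist n hnpos
  have hkey : shift^[n] (shiftZ (l:ℤ) yper) = yper := by
    rw [shift_iterate, shiftZ_add']
    have h1 : ((n:ℤ) + l) = (((l+1) * c.length : ℕ):ℤ) := by
      rw [hn, Nat.cast_sub (by omega)]
      push_cast; ring
    rw [h1, ← shift_iterate, hper (l+1)]
  rw [hkey] at hstep
  have htend := hten yper hperS hstep
  have hmono : Filter.Tendsto (fun k : ℕ => (k+1) * c.length) Filter.atTop Filter.atTop := by
    apply Filter.tendsto_atTop_mono (f := id) (fun k => ?_) Filter.tendsto_id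
    have := Nat.le_mul_of_pos_right (k+1) hp
    simp only [id]; omega
  have hsub2 := htend.comp hmono
  have hconst : ((fun n : ℕ => distTo (shift^[n] yper) Y) ∘ (fun k : ℕ => (k+1) * c.length))
      = fun _ : ℕ => distTo yper Y := by
    funext k
    show distTo (shift^[(k+1) * c.length] yper) Y = _
    rw [hper (k+1)]
  rw [hconst] at hsub2
  have hzero : distTo yper Y = 0 := tendsto_nhds_unique tendsto_const_nhds hsub2
  have hperY : yper ∈ Y := mem_of_distTo_small hY.2.2.1 hY.1
    (fun ε hε => by rw [hzero]; exact hε)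
  have hmemT := Tset_vertices hY.2.2.2.1 hperY hperpres 0
  have hv0 : G.s (cycE c hp 0) = v := by
    rw [cycE_eq hp 0 0 hp (by norm_num)]
    exact (walk_get hcwalk).1 hp
  rwa [hv0] at hmemT

end Aux15e

theorem linked_symm {A : Type} {G : LGraph A} {a b : G.V} (h : G.Linked a b) :
    G.Linked b a := by
  unfold LGraph.Linked at h ⊢
  rwa [Set.inter_comm]

theorem stmt15 {A : Type} [Finite A] (G : LGraph A) (hG : G.Essential)
    (Y : Set (ℤ → A)) (hY : IsAttractor G.Sigma' Y) :
    ∃ S : Set G.V, S.Nonempty ∧ G.SaturatedSet S ∧ G.ForwardClosed S ∧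
      Y = G.SigmaIn S := by
  refine ⟨Tset G Y, Tset_nonempty hY, ?_, Tset_forwardClosed hG hY, ?_⟩
  · intro a b hab
    induction hab with
    | refl => exact Iff.rfl
    | tail h1 h2 ih =>
        exact ih.trans ⟨linked_step hG hY h2, linked_step hG hY (linked_symm h2)⟩
  · exact Set.Subset.antisymm (Y_subset_sigmaInT hY) (sigmaInT_subset_Y hY)
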